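/- arXiv:2309.06392 — 3 statements merged into one kernel-verified Lean document; each statement's English description precedes it below -/
import Mathlib

section
/- Monotonicity of information centrality under edge removal: if S ⊊ H ⊆ E are edge sets such that G∖H is connected, then the information centrality of any vertex v in G∖H is strictly smaller than in G∖S, i.e., I_v(H) < I_v(S). -/
open Matrix Finset
open scoped Classical

/-- The four Penrose identities: `B` is the Moore–Penrose pseudoinverse of `A`. -/
def IsMoorePenrose {m : Type*} [Fintype m] [DecidableEq m]
    (A B : Matrix m m ℝ) : Prop :=
  A * B * A = A ∧ B * A * B = B ∧ (A * B)ᵀ = A * B ∧ (B * A)ᵀ = B * A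

/-- The Moore–Penrose pseudoinverse (chosen when it exists, `0` otherwise). -/
noncomputable def pinv {m : Type*} [Fintype m] [DecidableEq m]
    (A : Matrix m m ℝ) : Matrix m m ℝ :=
  if h : ∃ B, IsMoorePenrose A B then h.choose else 0

/-- Signed incidence vector `b_{xy} = e_x - e_y`. -/
def incVec {n : ℕ} (x y : Fin n) : Fin n → ℝ :=
  fun i => (if i = x then 1 else 0) - (if i = y then 1 else 0)

/-- Effective resistance between `x` and `y` in `G`. -/
noncomputable def effRes {n : ℕ} (G : SimpleGraph (Fin n)) (x y : Fin n) : ℝ :=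
  incVec x y ⬝ᵥ (pinv (G.lapMatrix ℝ)).mulVec (incVec x y)

/-- Resistance distance of `v`: sum of effective resistances to all other vertices. -/
noncomputable def resDist {n : ℕ} (G : SimpleGraph (Fin n)) (v : Fin n) : ℝ :=
  ∑ u ∈ Finset.univ.erase v, effRes G u v

/-- Information centrality of `v`. -/
noncomputable def infoCent {n : ℕ} (G : SimpleGraph (Fin n)) (v : Fin n) : ℝ :=
  (n : ℝ) / resDist G v

section MP
variable {m : Type*} [Fintype m] [DecidableEq m]

lemma sandwich_mul (U : Matrix m m ℝ) (hU : star U * U = 1) (f g : m → ℝ) :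
    (U * diagonal f * star U) * (U * diagonal g * star U)
      = U * diagonal (fun i => f i * g i) * star U := by
  rw [show (U * diagonal f * star U) * (U * diagonal g * star U)
      = U * (diagonal f * ((star U * U) * diagonal g)) * star U by noncomm_ring, hU, one_mul,
    diagonal_mul_diagonal]

lemma sandwich_symm (U : Matrix m m ℝ) (f : m → ℝ) :
    (U * diagonal f * star U)ᵀ = U * diagonal f * star U := by
  rw [← conjTranspose_eq_transpose_of_trivial]
  simp [conjTranspose_mul, Matrix.star_eq_conjTranspose, Matrix.mul_assoc, diagonal_conjTranspose]

lemma exists_mp_of_symm (A : Matrix m m ℝ) (hA : A.IsSymm) :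
    ∃ B, IsMoorePenrose A B := by
  have hH : A.IsHermitian := by
    rwa [Matrix.IsHermitian, conjTranspose_eq_transpose_of_trivial]
  set U : Matrix m m ℝ := (hH.eigenvectorUnitary : Matrix m m ℝ) with hUdef
  have hU : star U * U = 1 := mem_unitaryGroup_iff'.mp hH.eigenvectorUnitary.2
  set d : m → ℝ := RCLike.ofReal ∘ hH.eigenvalues with hddef
  have hspec : A = U * diagonal d * star U := hH.spectral_theorem
  have key : ∀ F F' : m → ℝ, F = F' → U * diagonal F * star U = U * diagonal F' * star U :=
    fun F F' h => by rw [h]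
  refine ⟨U * diagonal (fun i => (d i)⁻¹) * star U, ?_, ?_, ?_, ?_⟩
  · rw [hspec, sandwich_mul U hU, sandwich_mul U hU]
    apply key
    funext i
    rcases eq_or_ne (d i) 0 with h | h
    · simp [h]
    · field_simp
  · rw [hspec, sandwich_mul U hU, sandwich_mul U hU]
    apply key
    funext i
    rcases eq_or_ne (d i) 0 with h | h
    · simp [h]
    · field_simp
  · rw [hspec, sandwich_mul U hU, sandwich_symm]
  · rw [hspec, sandwich_mul U hU, sandwich_symm]

end MP

lemma pinv_spec {m : Type*} [Fintype m] [DecidableEq m] (A : Matrix m m ℝ)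
    (h : ∃ B, IsMoorePenrose A B) : IsMoorePenrose A (pinv A) := by
  rw [pinv, dif_pos h]; exact h.choose_spec

lemma incVec_dot {n : ℕ} (x y : Fin n) (w : Fin n → ℝ) :
    incVec x y ⬝ᵥ w = w x - w y := by
  simp [incVec, dotProduct, sub_mul, ite_mul, one_mul, zero_mul, Finset.sum_sub_distrib,
    Finset.sum_ite_eq', if_pos (Finset.mem_univ _)]

lemma sum_incVec {n : ℕ} (x y : Fin n) : ∑ i, incVec x y i = 0 := by
  simp [incVec, Finset.sum_sub_distrib, Finset.sum_ite_eq', if_pos (Finset.mem_univ _)]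

lemma dot_mulVec_symm {m : Type*} [Fintype m] {M : Matrix m m ℝ} (hM : M.IsSymm)
    (x y : m → ℝ) : x ⬝ᵥ (M *ᵥ y) = y ⬝ᵥ (M *ᵥ x) := by
  rw [dotProduct_mulVec, dotProduct_comm, ← mulVec_transpose, hM.eq]

lemma exists_potential {n : ℕ} (G : SimpleGraph (Fin n)) (hG : G.Connected)
    (b : Fin n → ℝ) (hb : ∑ i, b i = 0) :
    ∃ φ, G.lapMatrix ℝ *ᵥ φ = b := by
  set T := Matrix.toLin' (G.lapMatrix ℝ) with hT
  obtain ⟨v0⟩ := hG.nonempty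
  have hcard : Fintype.card G.ConnectedComponent = 1 := by
    refine Fintype.card_eq_one_iff.mpr ⟨G.connectedComponentMk v0, ?_⟩
    intro c
    induction c using SimpleGraph.ConnectedComponent.ind with
    | _ w => exact SimpleGraph.ConnectedComponent.sound (hG.preconnected w v0)
  have hker : Module.finrank ℝ (LinearMap.ker T) = 1 := by
    rw [hT, ← SimpleGraph.card_connectedComponent_eq_finrank_ker_toLin'_lapMatrix, hcard]
  set l : (Fin n → ℝ) →ₗ[ℝ] ℝ := ∑ i, LinearMap.proj i with hl
  have hlapp : ∀ x : Fin n → ℝ, l x = ∑ i, x i := by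
    intro x; simp [hl, LinearMap.sum_apply]
  have hlrange : LinearMap.range l = ⊤ := by
    rw [LinearMap.range_eq_top]
    intro c
    exact ⟨Pi.single v0 c, by simp [hlapp, Finset.sum_pi_single']⟩
  have hrn1 := l.finrank_range_add_finrank_ker
  have hrn2 := T.finrank_range_add_finrank_ker
  rw [hlrange] at hrn1
  simp only [finrank_top, Module.finrank_self, Module.finrank_fin_fun] at hrn1 hrn2
  rw [hker] at hrn2
  have hle : LinearMap.range T ≤ LinearMap.ker l := by
    rintro x ⟨y, rfl⟩
    rw [LinearMap.mem_ker, hlapp, hT, Matrix.toLin'_apply]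
    have h1 : (fun _ : Fin n => (1 : ℝ)) ⬝ᵥ (G.lapMatrix ℝ *ᵥ y)
        = y ⬝ᵥ (G.lapMatrix ℝ *ᵥ fun _ => 1) := dot_mulVec_symm (G.isSymm_lapMatrix ℝ) _ _
    rw [SimpleGraph.lapMatrix_mulVec_const_eq_zero, dotProduct_zero] at h1
    simpa [dotProduct] using h1
  have heq : LinearMap.range T = LinearMap.ker l :=
    Submodule.eq_of_le_of_finrank_le hle (by omega)
  have hbmem : b ∈ LinearMap.range T := by
    rw [heq, LinearMap.mem_ker, hlapp]; exact hb
  obtain ⟨φ, hφ⟩ := hbmem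
  exact ⟨φ, by rw [← Matrix.toLin'_apply (G.lapMatrix ℝ) φ]; exact hφ⟩

noncomputable def pot {n : ℕ} (G : SimpleGraph (Fin n)) (x y : Fin n) : Fin n → ℝ :=
  if h : ∃ φ, G.lapMatrix ℝ *ᵥ φ = incVec x y then h.choose else 0

lemma pot_spec {n : ℕ} {G : SimpleGraph (Fin n)} (hG : G.Connected) (x y : Fin n) :
    G.lapMatrix ℝ *ᵥ pot G x y = incVec x y := by
  have h : ∃ φ, G.lapMatrix ℝ *ᵥ φ = incVec x y :=
    exists_potential G hG _ (sum_incVec x y)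
  rw [pot, dif_pos h]; exact h.choose_spec

lemma effRes_eq {n : ℕ} {G : SimpleGraph (Fin n)} (hG : G.Connected) (x y : Fin n) :
    effRes G x y = incVec x y ⬝ᵥ pot G x y := by
  set L := G.lapMatrix ℝ with hL
  have hmp : IsMoorePenrose L (pinv L) := pinv_spec L (exists_mp_of_symm L (G.isSymm_lapMatrix ℝ))
  set B := pinv L with hB
  set φ := pot G x y with hφdef
  have hφ : L *ᵥ φ = incVec x y := pot_spec hG x y
  set ψ : Fin n → ℝ := B *ᵥ incVec x y - φ with hψdef
  have hψ : L *ᵥ ψ = 0 := by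
    rw [hψdef, mulVec_sub, ← hφ, mulVec_mulVec, mulVec_mulVec, hmp.1, sub_self]
  have hconst : ∀ i j, ψ i = ψ j := by
    have h0 : Matrix.toLin' L ψ = 0 := by rw [Matrix.toLin'_apply]; exact hψ
    rw [hL, Matrix.toLin'_apply, SimpleGraph.lapMatrix_mulVec_eq_zero_iff_forall_reachable] at h0
    exact fun i j => h0 i j (hG.preconnected i j)
  have hsum : ψ + φ = B *ᵥ incVec x y := sub_add_cancel _ _
  rw [effRes]
  show incVec x y ⬝ᵥ B *ᵥ incVec x y = incVec x y ⬝ᵥ φ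
  rw [← hsum, dotProduct_add, incVec_dot, hconst x y, sub_self, zero_add]


lemma psd_dot_nonneg {n : ℕ} (G : SimpleGraph (Fin n)) (x : Fin n → ℝ) :
    0 ≤ x ⬝ᵥ (G.lapMatrix ℝ *ᵥ x) := by
  have := (Matrix.posSemidef_iff_dotProduct_mulVec.mp (SimpleGraph.posSemidef_lapMatrix ℝ G)).2 x
  simpa using this

lemma psd_dot_zero {n : ℕ} (G : SimpleGraph (Fin n)) (x : Fin n → ℝ)
    (h : x ⬝ᵥ (G.lapMatrix ℝ *ᵥ x) = 0) : G.lapMatrix ℝ *ᵥ x = 0 := by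
  refine ((SimpleGraph.posSemidef_lapMatrix ℝ G).dotProduct_mulVec_zero_iff x).mp ?_
  simpa using h

lemma effRes_nonneg {n : ℕ} {G : SimpleGraph (Fin n)} (hG : G.Connected) (x y : Fin n) :
    0 ≤ effRes G x y := by
  rw [effRes_eq hG, ← pot_spec hG x y, dotProduct_comm]
  exact psd_dot_nonneg G _

lemma effRes_pos {n : ℕ} {G : SimpleGraph (Fin n)} (hG : G.Connected) {x y : Fin n}
    (hxy : x ≠ y) : 0 < effRes G x y := by
  rcases (effRes_nonneg hG x y).lt_or_eq with h | h
  · exact h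
  exfalso
  rw [effRes_eq hG, ← pot_spec hG x y, dotProduct_comm] at h
  have h0 := psd_dot_zero G _ h.symm
  rw [pot_spec hG x y] at h0
  have := congrFun h0 x
  simp [incVec, hxy] at this

lemma lap_sub_quad {n : ℕ} {G1 G2 : SimpleGraph (Fin n)} (h12 : G2 ≤ G1) {a b : Fin n}
    (h1ab : G1.Adj a b) (h2ab : ¬ G2.Adj a b) (x : Fin n → ℝ) :
    x ⬝ᵥ (G2.lapMatrix ℝ *ᵥ x) + (x a - x b)^2 ≤ x ⬝ᵥ (G1.lapMatrix ℝ *ᵥ x) := by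
  have e1 : x ⬝ᵥ (G1.lapMatrix ℝ *ᵥ x)
      = (∑ i, ∑ j, if G1.Adj i j then (x i - x j)^2 else 0) / 2 := by
    rw [← Matrix.toLinearMap₂'_apply', SimpleGraph.lapMatrix_toLinearMap₂']
  have e2 : x ⬝ᵥ (G2.lapMatrix ℝ *ᵥ x)
      = (∑ i, ∑ j, if G2.Adj i j then (x i - x j)^2 else 0) / 2 := by
    rw [← Matrix.toLinearMap₂'_apply', SimpleGraph.lapMatrix_toLinearMap₂']
  rw [e1, e2]
  rw [div_add' _ _ _ (two_ne_zero), div_le_div_iff_of_pos_right two_pos]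
  set g : Fin n × Fin n → ℝ := fun p =>
    (if G1.Adj p.1 p.2 then (x p.1 - x p.2)^2 else 0)
      - (if G2.Adj p.1 p.2 then (x p.1 - x p.2)^2 else 0) with hg
  have hgnn : ∀ p : Fin n × Fin n, 0 ≤ g p := by
    intro p
    rw [hg]
    dsimp only
    split_ifs with h1 h2 h2
    · simp
    · simpa using sq_nonneg _
    · exact absurd (h12 h2) h1
    · simp
  have hsub : ({(a, b), (b, a)} : Finset (Fin n × Fin n)) ⊆ Finset.univ ×ˢ Finset.univ := by
    intro p _; simp
  have hpair : ∑ p ∈ ({(a, b), (b, a)} : Finset (Fin n × Fin n)), g p = 2 * (x a - x b)^2 := by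
    rw [Finset.sum_pair (by simp [h1ab.ne] : ((a, b) : Fin n × Fin n) ≠ (b, a))]
    rw [hg]
    dsimp only
    rw [if_pos h1ab, if_pos h1ab.symm, if_neg h2ab, if_neg (fun h => h2ab h.symm)]
    ring
  have hsum : 2 * (x a - x b)^2 ≤ ∑ p ∈ Finset.univ ×ˢ Finset.univ, g p := by
    rw [← hpair]
    exact Finset.sum_le_sum_of_subset_of_nonneg hsub (fun p _ _ => hgnn p)
  have hgsum : ∑ p ∈ Finset.univ ×ˢ Finset.univ, g p
      = (∑ i, ∑ j, if G1.Adj i j then (x i - x j)^2 else 0)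
        - (∑ i, ∑ j, if G2.Adj i j then (x i - x j)^2 else 0) := by
    rw [hg, Finset.sum_sub_distrib]
    congr 1 <;> rw [← Finset.sum_product']
  rw [hgsum] at hsum
  linarith

lemma pair_le {n : ℕ} {G1 G2 : SimpleGraph (Fin n)} (h12 : G2 ≤ G1) (h1 : G1.Connected)
    (h2 : G2.Connected) {a b : Fin n} (h1ab : G1.Adj a b) (h2ab : ¬ G2.Adj a b)
    (u v : Fin n) :
    effRes G1 u v + (incVec a b ⬝ᵥ pot G1 u v)^2 ≤ effRes G2 u v := by
  set φ1 := pot G1 u v with hφ1def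
  set φ2 := pot G2 u v with hφ2def
  have hφ1 : G1.lapMatrix ℝ *ᵥ φ1 = incVec u v := pot_spec h1 u v
  have hφ2 : G2.lapMatrix ℝ *ᵥ φ2 = incVec u v := pot_spec h2 u v
  have hpsd : 0 ≤ (φ2 - φ1) ⬝ᵥ (G2.lapMatrix ℝ *ᵥ (φ2 - φ1)) := psd_dot_nonneg G2 _
  rw [mulVec_sub, dotProduct_sub, sub_dotProduct, sub_dotProduct] at hpsd
  have t22 : φ2 ⬝ᵥ (G2.lapMatrix ℝ *ᵥ φ2) = effRes G2 u v := by
    rw [hφ2, dotProduct_comm, ← effRes_eq h2]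
  have t21 : φ2 ⬝ᵥ (G2.lapMatrix ℝ *ᵥ φ1)
      = incVec u v ⬝ᵥ φ1 := by
    rw [dot_mulVec_symm (G2.isSymm_lapMatrix ℝ), hφ2, dotProduct_comm]
  have t12 : φ1 ⬝ᵥ (G2.lapMatrix ℝ *ᵥ φ2) = incVec u v ⬝ᵥ φ1 := by
    rw [hφ2, dotProduct_comm]
  have hquad := lap_sub_quad h12 h1ab h2ab φ1
  rw [hφ1] at hquad
  -- hquad : φ1 ⬝ᵥ L2 φ1 + (φ1 a - φ1 b)^2 ≤ φ1 ⬝ᵥ incVec u v ... careful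
  have hR1 : effRes G1 u v = incVec u v ⬝ᵥ φ1 := effRes_eq h1 u v
  rw [incVec_dot]
  have hd : φ1 ⬝ᵥ incVec u v = incVec u v ⬝ᵥ φ1 := dotProduct_comm _ _
  rw [hd] at hquad
  linarith


/-- Monotonicity of information centrality under edge removal: if `S ⊊ H ⊆ E` and
`G∖H` is connected, then `I_v(H) < I_v(S)` for every vertex `v`. -/
theorem stmt_6 {n : ℕ} (G : SimpleGraph (Fin n)) (hG : G.Connected)
    (S H : Set (Sym2 (Fin n))) (hH : H ⊆ G.edgeSet) (hSH : S ⊂ H)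
    (hconn : (G.deleteEdges H).Connected) (v : Fin n) :
    infoCent (G.deleteEdges H) v < infoCent (G.deleteEdges S) v := by
  obtain ⟨e, heH, heS⟩ := Set.exists_of_ssubset hSH
  revert heH heS
  induction e using Sym2.ind with
  | _ a b =>
  intro heH heS
  set G1 := G.deleteEdges S with hG1
  set G2 := G.deleteEdges H with hG2
  have h12 : G2 ≤ G1 := SimpleGraph.deleteEdges_anti hSH.subset
  clear_value G1 G2
  have h1 : G1.Connected := hconn.mono h12
  have hGab : G.Adj a b := (G.mem_edgeSet).mp (hH heH)
  have h1ab : G1.Adj a b := by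
    rw [hG1, SimpleGraph.deleteEdges_adj]; exact ⟨hGab, heS⟩
  have h2ab : ¬ G2.Adj a b := by
    rw [hG2, SimpleGraph.deleteEdges_adj]; exact fun h => h.2 heH
  have hab : a ≠ b := hGab.ne
  set q : Fin n → ℝ := fun u => incVec a b ⬝ᵥ pot G1 u v with hq
  -- q v = 0
  have hincvv : incVec v v = 0 := by funext i; simp [incVec]
  have hqv : q v = 0 := by
    have h0 : G1.lapMatrix ℝ *ᵥ pot G1 v v = 0 := by rw [pot_spec h1, hincvv]
    have hconst : ∀ i j : Fin n, pot G1 v v i = pot G1 v v j := by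
      have h0' : Matrix.toLin' (G1.lapMatrix ℝ) (pot G1 v v) = 0 := by
        rw [Matrix.toLin'_apply]; exact h0
      rw [Matrix.toLin'_apply, SimpleGraph.lapMatrix_mulVec_eq_zero_iff_forall_reachable] at h0'
      exact fun i j => h0' i j (h1.preconnected i j)
    rw [hq]
    dsimp only
    rw [incVec_dot, hconst a b, sub_self]
  -- q a - q b > 0
  have hqab : 0 < q a - q b := by
    set ψ : Fin n → ℝ := pot G1 a v - pot G1 b v with hψ
    have hψspec : G1.lapMatrix ℝ *ᵥ ψ = incVec a b := by
      rw [hψ, mulVec_sub, pot_spec h1, pot_spec h1]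
      funext i; simp [incVec]
    have hqd : q a - q b = ψ ⬝ᵥ (G1.lapMatrix ℝ *ᵥ ψ) := by
      rw [hψspec, dotProduct_comm, hq]
      dsimp only
      rw [hψ, dotProduct_sub]
    rcases (psd_dot_nonneg G1 ψ).lt_or_eq with h | h
    · rw [hqd]; exact h
    · exfalso
      have h0 := psd_dot_zero G1 ψ h.symm
      rw [hψspec] at h0
      have := congrFun h0 a
      simp [incVec, hab] at this
  -- choose w
  obtain ⟨w, hwv, hqw⟩ : ∃ w : Fin n, w ≠ v ∧ q w ≠ 0 := by
    rcases eq_or_ne (q a) 0 with hqa | hqa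
    · have hqb : q b ≠ 0 := fun h => by rw [hqa, h] at hqab; linarith
      exact ⟨b, fun h => hqb (h ▸ hqv), hqb⟩
    · exact ⟨a, fun h => hqa (h ▸ hqv), hqa⟩
  have hwmem : w ∈ Finset.univ.erase v := Finset.mem_erase.mpr ⟨hwv, Finset.mem_univ w⟩
  -- positivity of resDist G1 v
  have hpos1 : 0 < resDist G1 v := by
    rw [resDist]
    refine Finset.sum_pos (fun u hu => effRes_pos h1 (Finset.mem_erase.mp hu).1) ⟨w, hwmem⟩
  -- comparison
  have hcmp : resDist G1 v + (q w)^2 ≤ resDist G2 v := by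
    have step1 : resDist G1 v + (q w)^2
        ≤ ∑ u ∈ Finset.univ.erase v, (effRes G1 u v + (q u)^2) := by
      rw [Finset.sum_add_distrib, resDist]
      have : (q w)^2 ≤ ∑ u ∈ Finset.univ.erase v, (q u)^2 :=
        Finset.single_le_sum (fun u _ => sq_nonneg (q u)) hwmem
      linarith
    have step2 : ∑ u ∈ Finset.univ.erase v, (effRes G1 u v + (q u)^2) ≤ resDist G2 v := by
      rw [resDist]
      exact Finset.sum_le_sum (fun u _ => pair_le h12 h1 hconn h1ab h2ab u v)
    linarith
  have hqw2 : 0 < (q w)^2 := by positivity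
  have hlt : resDist G1 v < resDist G2 v := by linarith
  have hn : (0 : ℝ) < (n : ℝ) := by
    exact_mod_cast v.pos
  rw [infoCent, infoCent]
  exact div_lt_div_of_pos_left hn hpos1 hlt
end

section
/- The set function P ↦ I_v(P), the information centrality of a target node after removing edge set P, is not supermodular in general: there exist a connected 5-vertex graph G, a target vertex v, edges e₁, e₂ ∈ E, and sets S = ∅ ⊂ H = {e₁} such that I_v(S) − I_v(S ∪ {e₂}) < I_v(H) − I_v(H ∪ {e₂}). -/
open Matrix Finset
open scoped Classical

/-! ### Auxiliary material -/

/-- Uniqueness of the Moore–Penrose pseudoinverse. -/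
lemma isMoorePenrose_unique {m : Type*} [Fintype m] [DecidableEq m]
    {A B C : Matrix m m ℝ} (hB : IsMoorePenrose A B) (hC : IsMoorePenrose A C) : B = C := by
  obtain ⟨b1, b2, b3, b4⟩ := hB
  obtain ⟨c1, c2, c3, c4⟩ := hC
  have hAB : A * B = A * C := by
    calc A * B = (A * B)ᵀ := b3.symm
    _ = Bᵀ * Aᵀ := Matrix.transpose_mul _ _
    _ = Bᵀ * (A * C * A)ᵀ := by rw [c1]
    _ = Bᵀ * (Aᵀ * (A * C)ᵀ) := by rw [Matrix.transpose_mul (A * C) A]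
    _ = (Bᵀ * Aᵀ) * (A * C)ᵀ := by rw [mul_assoc]
    _ = (A * B)ᵀ * (A * C)ᵀ := by rw [Matrix.transpose_mul A B]
    _ = (A * B) * (A * C) := by rw [b3, c3]
    _ = ((A * B) * A) * C := (mul_assoc _ _ _).symm
    _ = A * C := by rw [b1]
  have hBA : B * A = C * A := by
    calc B * A = (B * A)ᵀ := b4.symm
    _ = Aᵀ * Bᵀ := Matrix.transpose_mul _ _
    _ = (A * C * A)ᵀ * Bᵀ := by rw [c1]
    _ = (A * (C * A))ᵀ * Bᵀ := by rw [mul_assoc]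
    _ = ((C * A)ᵀ * Aᵀ) * Bᵀ := by rw [Matrix.transpose_mul A (C * A)]
    _ = (C * A)ᵀ * (Aᵀ * Bᵀ) := mul_assoc _ _ _
    _ = (C * A)ᵀ * (B * A)ᵀ := by rw [← Matrix.transpose_mul B A]
    _ = (C * A) * (B * A) := by rw [c4, b4]
    _ = C * (A * B * A) := by rw [mul_assoc C A (B * A), ← mul_assoc A B A]
    _ = C * A := by rw [b1]
  calc B = B * A * B := b2.symm
  _ = (C * A) * B := by rw [hBA]
  _ = C * (A * B) := mul_assoc _ _ _
  _ = C * (A * C) := by rw [hAB]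
  _ = C * A * C := (mul_assoc _ _ _).symm
  _ = C := c2

lemma pinv_eq {m : Type*} [Fintype m] [DecidableEq m]
    (A B : Matrix m m ℝ) (h : IsMoorePenrose A B) : pinv A = B := by
  have hex : ∃ C, IsMoorePenrose A C := ⟨B, h⟩
  rw [pinv, dif_pos hex]
  exact isMoorePenrose_unique hex.choose_spec h

/-- Builds a Moore–Penrose pseudoinverse of an integer matrix `L` from integer data. -/
lemma mp_helper (L P M : Matrix (Fin 5) (Fin 5) ℤ) (d : ℤ) (hd : 0 < d)
    (h1 : L * P = M) (h2 : P * L = M) (hMt : Mᵀ = M)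
    (h3 : M * L = d • L) (h4 : M * P = d • P) :
    IsMoorePenrose (L.map fun x => (x : ℝ)) (((d : ℝ))⁻¹ • P.map fun x => (x : ℝ)) := by
  have hmul : ∀ X Y : Matrix (Fin 5) (Fin 5) ℤ,
      (X * Y).map (fun x => (x : ℝ)) =
        X.map (fun x => (x : ℝ)) * Y.map (fun x => (x : ℝ)) :=
    fun X Y => Matrix.map_mul (f := Int.castRingHom ℝ)
  have hsm : ∀ X : Matrix (Fin 5) (Fin 5) ℤ,
      ((d • X).map fun x => (x : ℝ)) = (d : ℝ) • X.map (fun x => (x : ℝ)) := by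
    intro X
    ext i j
    simp only [Matrix.map_apply, Matrix.smul_apply, smul_eq_mul, Int.cast_mul]
  have hd0 : (d : ℝ) ≠ 0 := by
    exact_mod_cast hd.ne'
  have e1 : (L.map fun x => (x : ℝ)) * (P.map fun x => (x : ℝ)) = M.map (fun x => (x : ℝ)) := by
    rw [← hmul, h1]
  have e2 : (P.map fun x => (x : ℝ)) * (L.map fun x => (x : ℝ)) = M.map (fun x => (x : ℝ)) := by
    rw [← hmul, h2]
  have e3 : M.map (fun x => (x : ℝ)) * (L.map fun x => (x : ℝ))
      = (d : ℝ) • L.map (fun x => (x : ℝ)) := by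
    rw [← hmul, h3, hsm]
  have e4 : M.map (fun x => (x : ℝ)) * (P.map fun x => (x : ℝ))
      = (d : ℝ) • P.map (fun x => (x : ℝ)) := by
    rw [← hmul, h4, hsm]
  have hMct : (M.map fun x => (x : ℝ))ᵀ = M.map (fun x => (x : ℝ)) := by
    rw [← Matrix.transpose_map, hMt]
  refine ⟨?_, ?_, ?_, ?_⟩
  · rw [mul_smul_comm, smul_mul_assoc, e1, e3, smul_smul, inv_mul_cancel₀ hd0, one_smul]
  · rw [smul_mul_assoc, e2, smul_mul_assoc, mul_smul_comm, e4,
      smul_smul ((d : ℝ))⁻¹ (d : ℝ), inv_mul_cancel₀ hd0, one_smul]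
  · rw [mul_smul_comm, e1, Matrix.transpose_smul, hMct]
  · rw [smul_mul_assoc, e2, Matrix.transpose_smul, hMct]

/-! ### The concrete graphs -/

def adjBA : Fin 5 → Fin 5 → Bool :=
  fun i j => !![false, true, true, true, true;
                true, false, true, true, false;
                true, true, false, false, false;
                true, true, false, false, false;
                true, false, false, false, false] i j

def adjBB : Fin 5 → Fin 5 → Bool :=
  fun i j => !![false, false, true, true, true;
                false, false, true, true, false;
                true, true, false, false, false;
                true, true, false, false, false;
                true, false, false, false, false] i j

def adjBC : Fin 5 → Fin 5 → Bool :=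
  fun i j => !![false, true, false, true, true;
                true, false, true, true, false;
                false, true, false, false, false;
                true, true, false, false, false;
                true, false, false, false, false] i j

def adjBD : Fin 5 → Fin 5 → Bool :=
  fun i j => !![false, false, false, true, true;
                false, false, true, true, false;
                false, true, false, false, false;
                true, true, false, false, false;
                true, false, false, false, false] i j

lemma adjBA_symm : ∀ a b : Fin 5, adjBA a b = true → adjBA b a = true := by decide

lemma adjBA_irrefl : ∀ a : Fin 5, ¬(adjBA a a = true) := by decide

def GA : SimpleGraph (Fin 5) where
  Adj i j := adjBA i j = true
  symm := ⟨fun a b h => adjBA_symm a b h⟩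
  loopless := ⟨fun a h => adjBA_irrefl a h⟩

instance : DecidableRel GA.Adj := fun a b => instDecidableEqBool (adjBA a b) true

lemma hadjA : ∀ i j, GA.Adj i j ↔ adjBA i j = true := fun _ _ => Iff.rfl

lemma hadjB : ∀ i j, (GA.deleteEdges {s(0,1)}).Adj i j ↔ adjBB i j = true := by
  intro i j
  simp only [SimpleGraph.deleteEdges_adj, Set.mem_singleton_iff, Sym2.eq_iff]
  revert i j; decide

lemma hadjC : ∀ i j, (GA.deleteEdges {s(0,2)}).Adj i j ↔ adjBC i j = true := by
  intro i j
  simp only [SimpleGraph.deleteEdges_adj, Set.mem_singleton_iff, Sym2.eq_iff]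
  revert i j; decide

lemma hadjD : ∀ i j, (GA.deleteEdges {s(0,1), s(0,2)}).Adj i j ↔ adjBD i j = true := by
  intro i j
  simp only [SimpleGraph.deleteEdges_adj, Set.mem_insert_iff, Set.mem_singleton_iff, Sym2.eq_iff]
  revert i j; decide

instance : DecidableRel (GA.deleteEdges {s(0,1)}).Adj :=
  fun a b => decidable_of_iff _ (hadjB a b).symm

instance : DecidableRel (GA.deleteEdges {s(0,2)}).Adj :=
  fun a b => decidable_of_iff _ (hadjC a b).symm

instance : DecidableRel (GA.deleteEdges {s(0,1), s(0,2)}).Adj :=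
  fun a b => decidable_of_iff _ (hadjD a b).symm

lemma hdegA : ∀ i, (GA).degree i = ![4,3,2,2,1] i := by decide

lemma hdegA' : ∀ (i : Fin 5) (F : Fintype ((GA).neighborSet i)),
    @SimpleGraph.degree _ (GA) i F = ![4,3,2,2,1] i := by
  intro i F
  rw [Subsingleton.elim F (SimpleGraph.neighborSetFintype _ i)]
  exact hdegA i

lemma hdegB : ∀ i, (GA.deleteEdges {s(0,1)}).degree i = ![3,2,2,2,1] i := by decide

lemma hdegB' : ∀ (i : Fin 5) (F : Fintype ((GA.deleteEdges {s(0,1)}).neighborSet i)),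
    @SimpleGraph.degree _ (GA.deleteEdges {s(0,1)}) i F = ![3,2,2,2,1] i := by
  intro i F
  rw [Subsingleton.elim F (SimpleGraph.neighborSetFintype _ i)]
  exact hdegB i

lemma hdegC : ∀ i, (GA.deleteEdges {s(0,2)}).degree i = ![3,3,1,2,1] i := by decide

lemma hdegC' : ∀ (i : Fin 5) (F : Fintype ((GA.deleteEdges {s(0,2)}).neighborSet i)),
    @SimpleGraph.degree _ (GA.deleteEdges {s(0,2)}) i F = ![3,3,1,2,1] i := by
  intro i F
  rw [Subsingleton.elim F (SimpleGraph.neighborSetFintype _ i)]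
  exact hdegC i

lemma hdegD : ∀ i, (GA.deleteEdges {s(0,1), s(0,2)}).degree i = ![2,2,1,2,1] i := by decide

lemma hdegD' : ∀ (i : Fin 5) (F : Fintype ((GA.deleteEdges {s(0,1), s(0,2)}).neighborSet i)),
    @SimpleGraph.degree _ (GA.deleteEdges {s(0,1), s(0,2)}) i F = ![2,2,1,2,1] i := by
  intro i F
  rw [Subsingleton.elim F (SimpleGraph.neighborSetFintype _ i)]
  exact hdegD i

/-! ### Integer matrices -/

def LAz : Matrix (Fin 5) (Fin 5) ℤ :=
  !![4,-1,-1,-1,-1; -1,3,-1,-1,0; -1,-1,2,0,0; -1,-1,0,2,0; -1,0,0,0,1]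

def PAz : Matrix (Fin 5) (Fin 5) ℤ :=
  !![32,-8,-8,-8,-8; -8,52,2,2,-48; -8,2,77,-23,-48; -8,2,-23,77,-48; -8,-48,-48,-48,152]

def MAz : Matrix (Fin 5) (Fin 5) ℤ :=
  !![160,-40,-40,-40,-40; -40,160,-40,-40,-40; -40,-40,160,-40,-40;
     -40,-40,-40,160,-40; -40,-40,-40,-40,160]

def LBz : Matrix (Fin 5) (Fin 5) ℤ :=
  !![3,0,-1,-1,-1; 0,2,-1,-1,0; -1,-1,2,0,0; -1,-1,0,2,0; -1,0,0,0,1]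

def PBz : Matrix (Fin 5) (Fin 5) ℤ :=
  !![24,-16,-6,-6,4; -16,44,4,4,-36; -6,4,39,-11,-26; -6,4,-11,39,-26; 4,-36,-26,-26,84]

def MBz : Matrix (Fin 5) (Fin 5) ℤ :=
  !![80,-20,-20,-20,-20; -20,80,-20,-20,-20; -20,-20,80,-20,-20;
     -20,-20,-20,80,-20; -20,-20,-20,-20,80]

def LCz : Matrix (Fin 5) (Fin 5) ℤ :=
  !![3,-1,0,-1,-1; -1,3,-1,-1,0; 0,-1,1,0,0; -1,-1,0,2,0; -1,0,0,0,1]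

def PCz : Matrix (Fin 5) (Fin 5) ℤ :=
  !![4,-1,-4,0,1; -1,4,1,0,-4; -4,1,13,-3,-7; 0,0,-3,6,-3; 1,-4,-7,-3,13]

def MCz : Matrix (Fin 5) (Fin 5) ℤ :=
  !![12,-3,-3,-3,-3; -3,12,-3,-3,-3; -3,-3,12,-3,-3; -3,-3,-3,12,-3; -3,-3,-3,-3,12]

def LDz : Matrix (Fin 5) (Fin 5) ℤ :=
  !![2,0,0,-1,-1; 0,2,-1,-1,0; 0,-1,1,0,0; -1,-1,0,2,0; -1,0,0,0,1]

def PDz : Matrix (Fin 5) (Fin 5) ℤ :=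
  !![3,-2,-3,0,2; -2,3,2,0,-3; -3,2,6,-1,-4; 0,0,-1,2,-1; 2,-3,-4,-1,6]

def MDz : Matrix (Fin 5) (Fin 5) ℤ :=
  !![4,-1,-1,-1,-1; -1,4,-1,-1,-1; -1,-1,4,-1,-1; -1,-1,-1,4,-1; -1,-1,-1,-1,4]

lemma mpA : IsMoorePenrose (LAz.map fun x => (x : ℝ))
    (((200 : ℤ) : ℝ)⁻¹ • PAz.map fun x => (x : ℝ)) :=
  mp_helper LAz PAz MAz 200 (by norm_num)
    (by decide) (by decide) (by decide) (by decide) (by decide)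

lemma mpB : IsMoorePenrose (LBz.map fun x => (x : ℝ))
    (((100 : ℤ) : ℝ)⁻¹ • PBz.map fun x => (x : ℝ)) :=
  mp_helper LBz PBz MBz 100 (by norm_num)
    (by decide) (by decide) (by decide) (by decide) (by decide)

lemma mpC : IsMoorePenrose (LCz.map fun x => (x : ℝ))
    (((15 : ℤ) : ℝ)⁻¹ • PCz.map fun x => (x : ℝ)) :=
  mp_helper LCz PCz MCz 15 (by norm_num)
    (by decide) (by decide) (by decide) (by decide) (by decide)

lemma mpD : IsMoorePenrose (LDz.map fun x => (x : ℝ))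
    (((5 : ℤ) : ℝ)⁻¹ • PDz.map fun x => (x : ℝ)) :=
  mp_helper LDz PDz MDz 5 (by norm_num)
    (by decide) (by decide) (by decide) (by decide) (by decide)

/-! ### Laplacian identifications -/

lemma lapA (inst : DecidableRel GA.Adj) :
    @SimpleGraph.lapMatrix (Fin 5) ℝ _ GA inst _ _ = LAz.map (fun x => (x : ℝ)) := by
  ext i j
  simp only [SimpleGraph.lapMatrix, Matrix.sub_apply, SimpleGraph.degMatrix,
    Matrix.diagonal_apply, SimpleGraph.adjMatrix_apply, Matrix.map_apply, hadjA]
  fin_cases i <;> fin_cases j <;>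
    simp [hdegA', adjBA, LAz, Matrix.vecHead, Matrix.vecTail] <;> norm_num

lemma lapB (inst : DecidableRel (GA.deleteEdges {s(0,1)}).Adj) :
    @SimpleGraph.lapMatrix (Fin 5) ℝ _ (GA.deleteEdges {s(0,1)}) inst _ _
      = LBz.map (fun x => (x : ℝ)) := by
  ext i j
  simp only [SimpleGraph.lapMatrix, Matrix.sub_apply, SimpleGraph.degMatrix,
    Matrix.diagonal_apply, SimpleGraph.adjMatrix_apply, Matrix.map_apply, hadjB]
  fin_cases i <;> fin_cases j <;>
    simp [hdegB', adjBB, LBz, Matrix.vecHead, Matrix.vecTail] <;> norm_num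

lemma lapC (inst : DecidableRel (GA.deleteEdges {s(0,2)}).Adj) :
    @SimpleGraph.lapMatrix (Fin 5) ℝ _ (GA.deleteEdges {s(0,2)}) inst _ _
      = LCz.map (fun x => (x : ℝ)) := by
  ext i j
  simp only [SimpleGraph.lapMatrix, Matrix.sub_apply, SimpleGraph.degMatrix,
    Matrix.diagonal_apply, SimpleGraph.adjMatrix_apply, Matrix.map_apply, hadjC]
  fin_cases i <;> fin_cases j <;>
    simp [hdegC', adjBC, LCz, Matrix.vecHead, Matrix.vecTail] <;> norm_num

lemma lapD (inst : DecidableRel (GA.deleteEdges {s(0,1), s(0,2)}).Adj) :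
    @SimpleGraph.lapMatrix (Fin 5) ℝ _ (GA.deleteEdges {s(0,1), s(0,2)}) inst _ _
      = LDz.map (fun x => (x : ℝ)) := by
  ext i j
  simp only [SimpleGraph.lapMatrix, Matrix.sub_apply, SimpleGraph.degMatrix,
    Matrix.diagonal_apply, SimpleGraph.adjMatrix_apply, Matrix.map_apply, hadjD]
  fin_cases i <;> fin_cases j <;>
    simp [hdegD', adjBD, LDz, Matrix.vecHead, Matrix.vecTail] <;> norm_num

/-! ### Numerical evaluations -/

lemma resA : resDist GA 0 = 11/4 := by
  have e1 : effRes GA 1 0 = 1/2 := by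
    unfold effRes
    rw [lapA, pinv_eq _ _ mpA]
    simp [incVec, Matrix.mulVec, dotProduct, Fin.sum_univ_five, Matrix.smul_apply,
      Matrix.map_apply, PAz, Matrix.vecHead, Matrix.vecTail]
    norm_num
  have e2 : effRes GA 2 0 = 5/8 := by
    unfold effRes
    rw [lapA, pinv_eq _ _ mpA]
    simp [incVec, Matrix.mulVec, dotProduct, Fin.sum_univ_five, Matrix.smul_apply,
      Matrix.map_apply, PAz, Matrix.vecHead, Matrix.vecTail]
    norm_num
  have e3 : effRes GA 3 0 = 5/8 := by
    unfold effRes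
    rw [lapA, pinv_eq _ _ mpA]
    simp [incVec, Matrix.mulVec, dotProduct, Fin.sum_univ_five, Matrix.smul_apply,
      Matrix.map_apply, PAz, Matrix.vecHead, Matrix.vecTail]
    norm_num
  have e4 : effRes GA 4 0 = 1 := by
    unfold effRes
    rw [lapA, pinv_eq _ _ mpA]
    simp [incVec, Matrix.mulVec, dotProduct, Fin.sum_univ_five, Matrix.smul_apply,
      Matrix.map_apply, PAz, Matrix.vecHead, Matrix.vecTail]
    norm_num
  unfold resDist
  rw [show (Finset.univ.erase (0 : Fin 5)) = {1, 2, 3, 4} from by decide]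
  rw [Finset.sum_insert (by decide), Finset.sum_insert (by decide),
    Finset.sum_insert (by decide), Finset.sum_singleton, e1, e2, e3, e4]
  norm_num

lemma resB : resDist (GA.deleteEdges {s(0,1)}) 0 = 7/2 := by
  have e1 : effRes (GA.deleteEdges {s(0,1)}) 1 0 = 1 := by
    unfold effRes
    rw [lapB, pinv_eq _ _ mpB]
    simp [incVec, Matrix.mulVec, dotProduct, Fin.sum_univ_five, Matrix.smul_apply,
      Matrix.map_apply, PBz, Matrix.vecHead, Matrix.vecTail]
    norm_num
  have e2 : effRes (GA.deleteEdges {s(0,1)}) 2 0 = 3/4 := by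
    unfold effRes
    rw [lapB, pinv_eq _ _ mpB]
    simp [incVec, Matrix.mulVec, dotProduct, Fin.sum_univ_five, Matrix.smul_apply,
      Matrix.map_apply, PBz, Matrix.vecHead, Matrix.vecTail]
    norm_num
  have e3 : effRes (GA.deleteEdges {s(0,1)}) 3 0 = 3/4 := by
    unfold effRes
    rw [lapB, pinv_eq _ _ mpB]
    simp [incVec, Matrix.mulVec, dotProduct, Fin.sum_univ_five, Matrix.smul_apply,
      Matrix.map_apply, PBz, Matrix.vecHead, Matrix.vecTail]
    norm_num
  have e4 : effRes (GA.deleteEdges {s(0,1)}) 4 0 = 1 := by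
    unfold effRes
    rw [lapB, pinv_eq _ _ mpB]
    simp [incVec, Matrix.mulVec, dotProduct, Fin.sum_univ_five, Matrix.smul_apply,
      Matrix.map_apply, PBz, Matrix.vecHead, Matrix.vecTail]
    norm_num
  unfold resDist
  rw [show (Finset.univ.erase (0 : Fin 5)) = {1, 2, 3, 4} from by decide]
  rw [Finset.sum_insert (by decide), Finset.sum_insert (by decide),
    Finset.sum_insert (by decide), Finset.sum_singleton, e1, e2, e3, e4]
  norm_num

lemma resC : resDist (GA.deleteEdges {s(0,2)}) 0 = 4 := by
  have e1 : effRes (GA.deleteEdges {s(0,2)}) 1 0 = 2/3 := by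
    unfold effRes
    rw [lapC, pinv_eq _ _ mpC]
    simp [incVec, Matrix.mulVec, dotProduct, Fin.sum_univ_five, Matrix.smul_apply,
      Matrix.map_apply, PCz, Matrix.vecHead, Matrix.vecTail]
    norm_num
  have e2 : effRes (GA.deleteEdges {s(0,2)}) 2 0 = 5/3 := by
    unfold effRes
    rw [lapC, pinv_eq _ _ mpC]
    simp [incVec, Matrix.mulVec, dotProduct, Fin.sum_univ_five, Matrix.smul_apply,
      Matrix.map_apply, PCz, Matrix.vecHead, Matrix.vecTail]
    norm_num
  have e3 : effRes (GA.deleteEdges {s(0,2)}) 3 0 = 2/3 := by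
    unfold effRes
    rw [lapC, pinv_eq _ _ mpC]
    simp [incVec, Matrix.mulVec, dotProduct, Fin.sum_univ_five, Matrix.smul_apply,
      Matrix.map_apply, PCz, Matrix.vecHead, Matrix.vecTail]
    norm_num
  have e4 : effRes (GA.deleteEdges {s(0,2)}) 4 0 = 1 := by
    unfold effRes
    rw [lapC, pinv_eq _ _ mpC]
    simp [incVec, Matrix.mulVec, dotProduct, Fin.sum_univ_five, Matrix.smul_apply,
      Matrix.map_apply, PCz, Matrix.vecHead, Matrix.vecTail]
    norm_num
  unfold resDist
  rw [show (Finset.univ.erase (0 : Fin 5)) = {1, 2, 3, 4} from by decide]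
  rw [Finset.sum_insert (by decide), Finset.sum_insert (by decide),
    Finset.sum_insert (by decide), Finset.sum_singleton, e1, e2, e3, e4]
  norm_num

lemma resD : resDist (GA.deleteEdges {s(0,1), s(0,2)}) 0 = 7 := by
  have e1 : effRes (GA.deleteEdges {s(0,1), s(0,2)}) 1 0 = 2 := by
    unfold effRes
    rw [lapD, pinv_eq _ _ mpD]
    simp [incVec, Matrix.mulVec, dotProduct, Fin.sum_univ_five, Matrix.smul_apply,
      Matrix.map_apply, PDz, Matrix.vecHead, Matrix.vecTail]
    norm_num
  have e2 : effRes (GA.deleteEdges {s(0,1), s(0,2)}) 2 0 = 3 := by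
    unfold effRes
    rw [lapD, pinv_eq _ _ mpD]
    simp [incVec, Matrix.mulVec, dotProduct, Fin.sum_univ_five, Matrix.smul_apply,
      Matrix.map_apply, PDz, Matrix.vecHead, Matrix.vecTail]
    norm_num
  have e3 : effRes (GA.deleteEdges {s(0,1), s(0,2)}) 3 0 = 1 := by
    unfold effRes
    rw [lapD, pinv_eq _ _ mpD]
    simp [incVec, Matrix.mulVec, dotProduct, Fin.sum_univ_five, Matrix.smul_apply,
      Matrix.map_apply, PDz, Matrix.vecHead, Matrix.vecTail]
    norm_num
  have e4 : effRes (GA.deleteEdges {s(0,1), s(0,2)}) 4 0 = 1 := by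
    unfold effRes
    rw [lapD, pinv_eq _ _ mpD]
    simp [incVec, Matrix.mulVec, dotProduct, Fin.sum_univ_five, Matrix.smul_apply,
      Matrix.map_apply, PDz, Matrix.vecHead, Matrix.vecTail]
    norm_num
  unfold resDist
  rw [show (Finset.univ.erase (0 : Fin 5)) = {1, 2, 3, 4} from by decide]
  rw [Finset.sum_insert (by decide), Finset.sum_insert (by decide),
    Finset.sum_insert (by decide), Finset.sum_singleton, e1, e2, e3, e4]
  norm_num

/-! ### Connectivity -/

lemma connD : (GA.deleteEdges {s(0,1), s(0,2)}).Connected := by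
  rw [SimpleGraph.connected_iff_exists_forall_reachable]
  refine ⟨3, fun w => ?_⟩
  have h30 : (GA.deleteEdges {s(0,1), s(0,2)}).Adj 3 0 := (hadjD 3 0).mpr rfl
  have h31 : (GA.deleteEdges {s(0,1), s(0,2)}).Adj 3 1 := (hadjD 3 1).mpr rfl
  have h12 : (GA.deleteEdges {s(0,1), s(0,2)}).Adj 1 2 := (hadjD 1 2).mpr rfl
  have h04 : (GA.deleteEdges {s(0,1), s(0,2)}).Adj 0 4 := (hadjD 0 4).mpr rfl
  fin_cases w
  · exact h30.reachable
  · exact h31.reachable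
  · exact h31.reachable.trans h12.reachable
  · exact SimpleGraph.Reachable.refl _
  · exact h30.reachable.trans h04.reachable

/-! ### Main theorem -/

/-- Non-supermodularity of information centrality: there is a connected 5-vertex graph
`G`, a target vertex `v`, and distinct edges `e₁, e₂` (all removals keeping the graph
connected) such that with `S = ∅` and `H = {e₁}`,
`I_v(S) - I_v(S ∪ {e₂}) < I_v(H) - I_v(H ∪ {e₂})`. -/
theorem stmt_7 :
    ∃ (G : SimpleGraph (Fin 5)) (v : Fin 5) (e₁ e₂ : Sym2 (Fin 5)),
      G.Connected ∧ e₁ ∈ G.edgeSet ∧ e₂ ∈ G.edgeSet ∧ e₁ ≠ e₂ ∧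
      (G.deleteEdges {e₁}).Connected ∧ (G.deleteEdges {e₂}).Connected ∧
      (G.deleteEdges {e₁, e₂}).Connected ∧
      infoCent G v - infoCent (G.deleteEdges {e₂}) v <
        infoCent (G.deleteEdges {e₁}) v - infoCent (G.deleteEdges {e₁, e₂}) v := by
  refine ⟨GA, 0, s(0,1), s(0,2), ?_, ?_, ?_, ?_, ?_, ?_, connD, ?_⟩
  · exact connD.mono (SimpleGraph.deleteEdges_le _)
  · exact (SimpleGraph.mem_edgeSet GA).mpr (by decide)
  · exact (SimpleGraph.mem_edgeSet GA).mpr (by decide)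
  · simp only [ne_eq, Sym2.eq_iff]
    decide
  · exact connD.mono (SimpleGraph.deleteEdges_anti
      (show ({s(0,1)} : Set (Sym2 (Fin 5))) ⊆ {s(0,1), s(0,2)} from
        Set.singleton_subset_iff.mpr (Set.mem_insert _ _)))
  · exact connD.mono (SimpleGraph.deleteEdges_anti
      (show ({s(0,2)} : Set (Sym2 (Fin 5))) ⊆ {s(0,1), s(0,2)} from
        Set.subset_insert _ _))
  · have hA : infoCent GA 0 = 20/11 := by
      unfold infoCent; rw [resA]; norm_num
    have hB : infoCent (GA.deleteEdges {s(0,1)}) 0 = 10/7 := by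
      unfold infoCent; rw [resB]; norm_num
    have hC : infoCent (GA.deleteEdges {s(0,2)}) 0 = 5/4 := by
      unfold infoCent; rw [resC]; norm_num
    have hD : infoCent (GA.deleteEdges {s(0,1), s(0,2)}) 0 = 5/7 := by
      unfold infoCent; rw [resD]; norm_num
    rw [hA, hB, hC, hD]
    norm_num
end

section
/- Schur complement preserves effective resistance: for a connected graph G with Laplacian L and nonempty T ⊂ V, the Schur complement S(T) = L_{[T,T]} − L_{[T,F]} L_{[F,F]}⁻¹ L_{[F,T]} (F = V∖T) is itself a Laplacian of a weighted graph on T, and for any x, y ∈ T the effective resistance between x and y in that graph equals the effective resistance between x and y in G. -/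
open Matrix Finset
open scoped Classical

/-- Schur complement of the Laplacian onto a vertex set `T` (with `F = Tᶜ`). -/
noncomputable def schur {n : ℕ} (G : SimpleGraph (Fin n)) (T : Set (Fin n)) :
    Matrix T T ℝ :=
  (G.lapMatrix ℝ).submatrix (Subtype.val : T → Fin n) (Subtype.val : T → Fin n) -
    (G.lapMatrix ℝ).submatrix (Subtype.val : T → Fin n) (Subtype.val : ↥Tᶜ → Fin n) *
      ((G.lapMatrix ℝ).submatrix (Subtype.val : ↥Tᶜ → Fin n) (Subtype.val : ↥Tᶜ → Fin n))⁻¹ *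
      (G.lapMatrix ℝ).submatrix (Subtype.val : ↥Tᶜ → Fin n) (Subtype.val : T → Fin n)

section Helpers

variable {m : Type*} [Fintype m] [DecidableEq m]

lemma exists_moorePenrose {A : Matrix m m ℝ} (hA : A.IsHermitian) :
    ∃ B, IsMoorePenrose A B := by
  set U : Matrix m m ℝ := (hA.eigenvectorUnitary : Matrix m m ℝ) with hU
  have h1 : star U * U = 1 := (Matrix.mem_unitaryGroup_iff').mp hA.eigenvectorUnitary.2
  set d : m → ℝ := hA.eigenvalues with hd
  have hAe : A = U * diagonal d * star U := by simpa using hA.spectral_theorem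
  have hstarU : star U = Uᵀ := by
    rw [Matrix.star_eq_conjTranspose, Matrix.conjTranspose_eq_transpose_of_trivial]
  have collapse : ∀ f g : m → ℝ,
      (U * diagonal f * star U) * (U * diagonal g * star U) =
        U * diagonal (fun i => f i * g i) * star U := by
    intro f g
    simp only [Matrix.mul_assoc]
    rw [← Matrix.mul_assoc (star U) U, h1, Matrix.one_mul,
      ← Matrix.mul_assoc (diagonal f) (diagonal g), diagonal_mul_diagonal]
  have symmN : ∀ f : m → ℝ, (U * diagonal f * star U)ᵀ = U * diagonal f * star U := by
    intro f
    rw [hstarU, Matrix.transpose_mul, Matrix.transpose_mul, Matrix.transpose_transpose,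
      Matrix.diagonal_transpose, Matrix.mul_assoc]
  refine ⟨U * diagonal (fun i => (d i)⁻¹) * star U, ?_, ?_, ?_, ?_⟩
  · rw [hAe, collapse, collapse]
    congr 2
    funext i
    by_cases h : d i = 0 <;> field_simp [h]
  · rw [hAe, collapse, collapse]
    congr 2
    funext i
    by_cases h : d i = 0 <;> field_simp [h]
  · rw [hAe, collapse, symmN]
  · rw [hAe, collapse, symmN]

lemma pinv_isMoorePenrose {A : Matrix m m ℝ} (hA : A.IsHermitian) :
    IsMoorePenrose A (pinv A) := by
  have h := exists_moorePenrose hA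
  rw [pinv, dif_pos h]
  exact h.choose_spec

lemma posdef_mulVec_nonneg {A : Matrix m m ℝ} (hA : A.PosDef)
    (hoff : ∀ i j, i ≠ j → A i j ≤ 0) {x b : m → ℝ} (hxb : A *ᵥ x = b)
    (hb : ∀ i, 0 ≤ b i) : ∀ i, 0 ≤ x i := by
  set p : m → ℝ := fun i => max (x i) 0 with hp
  set q : m → ℝ := fun i => max (-x i) 0 with hq
  have hx : ∀ i, x i = p i - q i := by
    intro i; simp [hp, hq, max_def]; split_ifs <;> linarith
  have hpq : ∀ i, p i * q i = 0 := by
    intro i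
    rcases le_or_gt (x i) 0 with h | h
    · have : p i = 0 := max_eq_right h
      simp [this]
    · have : q i = 0 := max_eq_right (by linarith)
      simp [this]
  have hp0 : ∀ i, 0 ≤ p i := fun i => le_max_right _ _
  have hq0 : ∀ i, 0 ≤ q i := fun i => le_max_right _ _
  have h1 : q ⬝ᵥ (A *ᵥ p) ≤ 0 := by
    rw [dotProduct]
    apply Finset.sum_nonpos
    intro i _
    rw [mulVec, dotProduct, Finset.mul_sum]
    apply Finset.sum_nonpos
    intro j _
    by_cases hij : i = j
    · subst hij
      rcases mul_eq_zero.mp (hpq i) with h | h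
      · simp [h]
      · simp [h]
    · have := hoff i j hij
      have h5 : 0 ≤ q i * p j := mul_nonneg (hq0 i) (hp0 j)
      nlinarith
  have h2 : 0 ≤ q ⬝ᵥ b := Finset.sum_nonneg fun i _ => mul_nonneg (hq0 i) (hb i)
  have h3 : q ⬝ᵥ b = q ⬝ᵥ (A *ᵥ p) - q ⬝ᵥ (A *ᵥ q) := by
    rw [← hxb]
    have : x = p - q := funext fun i => by simpa using hx i
    rw [this, mulVec_sub, dotProduct_sub]
  have h4 : q ⬝ᵥ (A *ᵥ q) ≤ 0 := by linarith
  have hq_zero : q = 0 := by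
    by_contra hqne
    have := hA.dotProduct_mulVec_pos hqne
    rw [star_trivial] at this
    linarith
  intro i
  have : q i = 0 := by rw [hq_zero]; rfl
  have := hx i
  have := hp0 i
  linarith

lemma posdef_inv_entry_nonneg {A : Matrix m m ℝ} (hA : A.PosDef)
    (hoff : ∀ i j, i ≠ j → A i j ≤ 0) (i j : m) : 0 ≤ A⁻¹ i j := by
  have hdet : IsUnit A.det := hA.det_pos.ne'.isUnit
  have hAA : A * A⁻¹ = 1 := Matrix.mul_nonsing_inv A hdet
  have hx : A *ᵥ (fun k => A⁻¹ k j) = fun i => (1 : Matrix m m ℝ) i j := by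
    funext i
    calc (A *ᵥ fun k => A⁻¹ k j) i = (A * A⁻¹) i j := by
          simp [mulVec, dotProduct, Matrix.mul_apply]
      _ = (1 : Matrix m m ℝ) i j := by rw [hAA]
  exact posdef_mulVec_nonneg hA hoff hx
    (fun k => by by_cases h : k = j <;> simp [Matrix.one_apply, h]) i

lemma mulVec_dot {M : Matrix m m ℝ} (u z : m → ℝ) :
    (M *ᵥ u) ⬝ᵥ z = u ⬝ᵥ (Mᵀ *ᵥ z) := by
  simp only [dotProduct, mulVec, dotProduct, transpose_apply, Finset.sum_mul, Finset.mul_sum]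
  rw [Finset.sum_comm]
  exact Finset.sum_congr rfl fun i _ => Finset.sum_congr rfl fun j _ => by ring

lemma key_quad {A B : Matrix m m ℝ}
    (hA : Aᵀ = A) (hMP : A * B * A = A) {u bvec : m → ℝ} (hu : A *ᵥ u = bvec) :
    bvec ⬝ᵥ (B *ᵥ bvec) = bvec ⬝ᵥ u := by
  have h1 : bvec ⬝ᵥ (B *ᵥ bvec) = (A *ᵥ u) ⬝ᵥ (B *ᵥ (A *ᵥ u)) := by rw [hu]
  rw [h1, mulVec_dot, hA, Matrix.mulVec_mulVec, Matrix.mulVec_mulVec,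
    hMP, hu, dotProduct_comm]

end Helpers

section Lap

variable {n : ℕ} (G : SimpleGraph (Fin n))

lemma sum_split (T : Set (Fin n)) (f : Fin n → ℝ) :
    ∑ i, f i = (∑ i : T, f ↑i) + ∑ i : ↥Tᶜ, f ↑i := by
  rw [← Fintype.sum_subtype_add_sum_subtype (· ∈ T) f]
  rfl

lemma lap_symm : (G.lapMatrix ℝ)ᵀ = G.lapMatrix ℝ := G.isSymm_lapMatrix (R := ℝ)

lemma lap_offdiag {i j : Fin n} (h : i ≠ j) : G.lapMatrix ℝ i j ≤ 0 := by
  simp only [SimpleGraph.lapMatrix, Matrix.sub_apply, SimpleGraph.degMatrix,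
    Matrix.diagonal_apply_ne _ h, SimpleGraph.adjMatrix_apply, zero_sub, neg_nonpos]
  positivity

lemma lap_rowsum (i : Fin n) : ∑ j, G.lapMatrix ℝ i j = 0 := by
  have := congrFun (G.lapMatrix_mulVec_const_eq_zero (R := ℝ)) i
  simpa [mulVec, dotProduct] using this

lemma lap_ker (hG : G.Connected) {x : Fin n → ℝ} (hx : G.lapMatrix ℝ *ᵥ x = 0) :
    ∀ i j, x i = x j := by
  have : Matrix.toLin' (G.lapMatrix ℝ) x = 0 := by
    rw [Matrix.toLin'_apply]; exact hx
  rw [Matrix.toLin'_apply, G.lapMatrix_mulVec_eq_zero_iff_forall_reachable] at this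
  exact fun i j => this i j (hG.preconnected i j)

/-- extension by zero -/
noncomputable def extz (T : Set (Fin n)) (x : T → ℝ) : Fin n → ℝ :=
  fun i => if h : i ∈ T then x ⟨i, h⟩ else 0

lemma dot_extz (M : Matrix (Fin n) (Fin n) ℝ) (S : Set (Fin n)) (x : S → ℝ) :
    extz S x ⬝ᵥ (M *ᵥ extz S x) =
      x ⬝ᵥ ((M.submatrix (Subtype.val : S → Fin n) (Subtype.val : S → Fin n)) *ᵥ x) := by
  simp only [dotProduct, mulVec, dotProduct, Finset.mul_sum]
  rw [sum_split S]
  have h2 : ∀ i : ↥Sᶜ, ∑ j, extz S x ↑i * (M ↑i j * extz S x j) = 0 := by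
    intro i
    have : extz S x ↑i = 0 := dif_neg i.2
    simp [this]
  rw [Finset.sum_congr rfl (fun i _ => h2 i), Finset.sum_const_zero, add_zero]
  apply Finset.sum_congr rfl
  intro i _
  rw [sum_split S]
  have h3 : ∀ j : ↥Sᶜ, extz S x ↑i * (M ↑i ↑j * extz S x ↑j) = 0 := by
    intro j
    have : extz S x ↑j = 0 := dif_neg j.2
    simp [this]
  rw [Finset.sum_congr rfl (fun j _ => h3 j), Finset.sum_const_zero, add_zero]
  have hxi : extz S x ↑i = x i := by
    simp [extz]
  apply Finset.sum_congr rfl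
  intro j _
  have hxj : extz S x ↑j = x j := by simp [extz]
  rw [hxi, hxj]
  rfl

lemma DFF_posdef (hG : G.Connected) (T : Set (Fin n)) (hT : T.Nonempty) :
    ((G.lapMatrix ℝ).submatrix (Subtype.val : ↥Tᶜ → Fin n)
      (Subtype.val : ↥Tᶜ → Fin n)).PosDef := by
  set D := (G.lapMatrix ℝ).submatrix (Subtype.val : ↥Tᶜ → Fin n) (Subtype.val : ↥Tᶜ → Fin n)
    with hD
  have hDsymm : D.IsHermitian := by
    rw [Matrix.IsHermitian, Matrix.conjTranspose_eq_transpose_of_trivial, hD,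
      Matrix.transpose_submatrix, lap_symm]
  refine Matrix.PosDef.of_dotProduct_mulVec_pos hDsymm fun x hx => ?_
  rw [star_trivial]
  have key : x ⬝ᵥ (D *ᵥ x) = extz Tᶜ x ⬝ᵥ (G.lapMatrix ℝ *ᵥ extz Tᶜ x) := by
    have h := (dot_extz (G.lapMatrix ℝ) Tᶜ x).symm
    convert h using 2
    congr!
  set v := extz Tᶜ x with hv
  have hnn : 0 ≤ v ⬝ᵥ (G.lapMatrix ℝ *ᵥ v) := by
    have := (SimpleGraph.posSemidef_lapMatrix ℝ G).dotProduct_mulVec_nonneg v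
    rwa [star_trivial] at this
  rcases lt_or_eq_of_le hnn with hlt | heq
  · rw [key]; exact hlt
  · exfalso
    have h0 : Matrix.toLinearMap₂' ℝ (G.lapMatrix ℝ) v v = 0 := by
      rw [Matrix.toLinearMap₂'_apply']; exact heq.symm
    rw [G.lapMatrix_toLinearMap₂'_apply'_eq_zero_iff_forall_reachable] at h0
    obtain ⟨t, ht⟩ := hT
    have hvt : v t = 0 := dif_neg (by simp [ht])
    have hconst : ∀ i, v i = 0 := fun i => (h0 i t (hG.preconnected i t)).trans hvt
    apply hx
    funext j
    have := hconst ↑j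
    rw [hv] at this
    simpa [extz, j.2] using this

lemma lap_solve (hG : G.Connected) (bv : Fin n → ℝ)
    (hb : ∑ i, bv i = 0) :
    G.lapMatrix ℝ *ᵥ (pinv (G.lapMatrix ℝ) *ᵥ bv) = bv := by
  set L := G.lapMatrix ℝ with hL
  have hHerm : L.IsHermitian := (SimpleGraph.posSemidef_lapMatrix ℝ G).1
  obtain ⟨h1, h2, h3, h4⟩ := pinv_isMoorePenrose hHerm
  set P := L * pinv L with hP
  have hPsymm : Pᵀ = P := h3
  have hPL : P * L = L := h1
  have hLP : L * P = L := by
    calc L * P = Lᵀ * Pᵀ := by rw [lap_symm G, hPsymm]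
      _ = (P * L)ᵀ := (Matrix.transpose_mul _ _).symm
      _ = Lᵀ := by rw [hPL]
      _ = L := lap_symm G
  have hPP : P * P = P := by
    nth_rewrite 2 [hP]
    rw [← Matrix.mul_assoc, hPL, ← hP]
  set w := bv - P *ᵥ bv with hw
  have hLw : L *ᵥ w = 0 := by
    rw [hw, Matrix.mulVec_sub, Matrix.mulVec_mulVec, hLP, sub_self]
  have hconst : ∀ i j, w i = w j := lap_ker G hG hLw
  have hPw : P *ᵥ w = 0 := by
    rw [hw, Matrix.mulVec_sub, Matrix.mulVec_mulVec, hPP, sub_self]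
  have hwb : w ⬝ᵥ bv = 0 := by
    rcases isEmpty_or_nonempty (Fin n) with hE | hNE
    · simp [dotProduct]
    · obtain ⟨i0⟩ := hNE
      have : ∀ i, w i = w i0 := fun i => hconst i i0
      calc w ⬝ᵥ bv = ∑ i, w i0 * bv i :=
            Finset.sum_congr rfl fun i _ => by rw [this i]
        _ = w i0 * ∑ i, bv i := by rw [Finset.mul_sum]
        _ = 0 := by rw [hb, mul_zero]
  have hww : w ⬝ᵥ w = 0 := by
    have hwPb : w ⬝ᵥ (P *ᵥ bv) = 0 := by
      rw [dotProduct_comm, mulVec_dot, hPsymm, hPw]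
      simp [dotProduct]
    calc w ⬝ᵥ w = w ⬝ᵥ bv - w ⬝ᵥ (P *ᵥ bv) := by rw [hw]; rw [dotProduct_sub]
      _ = 0 := by rw [hwb, hwPb, sub_zero]
  have hw0 : ∀ i, w i = 0 := by
    have hsq : ∑ i, (w i)^2 = 0 := by
      have : w ⬝ᵥ w = ∑ i, (w i)^2 := by simp [dotProduct, sq]
      linarith [this ▸ hww]
    intro i
    have := (Finset.sum_eq_zero_iff_of_nonneg (fun i _ => sq_nonneg (w i))).mp hsq i
      (Finset.mem_univ i)
    exact pow_eq_zero_iff (two_ne_zero) |>.mp this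
  have : P *ᵥ bv = bv := by
    funext i
    have h := hw0 i
    rw [hw] at h
    simp only [Pi.sub_apply] at h
    linarith
  rw [Matrix.mulVec_mulVec]
  exact this

end Lap

/-- The Schur complement `S(T)` of the Laplacian of a connected graph is itself the
Laplacian of a weighted graph on `T` (symmetric, zero row sums, nonpositive
off-diagonal entries), and it preserves effective resistances between vertices of
`T`. -/
theorem stmt_16 {n : ℕ} (G : SimpleGraph (Fin n)) (hG : G.Connected)
    (T : Set (Fin n)) (hT : T.Nonempty) (hTV : T ≠ Set.univ) :
    ((schur G T)ᵀ = schur G T ∧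
      (∀ i : T, ∑ j : T, schur G T i j = 0) ∧
      (∀ i j : T, i ≠ j → schur G T i j ≤ 0)) ∧
    (∀ x y : T,
      (fun i : T => (if i = x then (1 : ℝ) else 0) - if i = y then 1 else 0) ⬝ᵥ
          (pinv (schur G T)).mulVec
            (fun i : T => (if i = x then (1 : ℝ) else 0) - if i = y then 1 else 0) =
        effRes G x y) := by
  set L := G.lapMatrix ℝ with hL
  set A := L.submatrix (Subtype.val : T → Fin n) (Subtype.val : T → Fin n) with hA
  set Bm := L.submatrix (Subtype.val : T → Fin n) (Subtype.val : ↥Tᶜ → Fin n) with hBm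
  set C := L.submatrix (Subtype.val : ↥Tᶜ → Fin n) (Subtype.val : T → Fin n) with hC
  set D := L.submatrix (Subtype.val : ↥Tᶜ → Fin n) (Subtype.val : ↥Tᶜ → Fin n) with hD
  have hSdef : schur G T = A - Bm * D⁻¹ * C := rfl
  have hDpd : D.PosDef := DFF_posdef G hG T hT
  have hDdet : IsUnit D.det := hDpd.det_pos.ne'.isUnit
  have hAT : Aᵀ = A := by rw [hA, Matrix.transpose_submatrix, lap_symm]
  have hDT : Dᵀ = D := by rw [hD, Matrix.transpose_submatrix, lap_symm]
  have hCT : Cᵀ = Bm := by rw [hC, Matrix.transpose_submatrix, lap_symm]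
  have hBT : Bmᵀ = C := by rw [hBm, Matrix.transpose_submatrix, lap_symm]
  have hDinvT : (D⁻¹)ᵀ = D⁻¹ := by rw [Matrix.transpose_nonsing_inv, hDT]
  have hSsymm : (schur G T)ᵀ = schur G T := by
    rw [hSdef, Matrix.transpose_sub, Matrix.transpose_mul, Matrix.transpose_mul, hAT, hCT,
      hDinvT, hBT, Matrix.mul_assoc]
  have hDoff : ∀ i j : ↥Tᶜ, i ≠ j → D i j ≤ 0 := fun i j hij =>
    lap_offdiag G (Subtype.coe_injective.ne hij)
  have hDinv_nn : ∀ i j, 0 ≤ D⁻¹ i j := posdef_inv_entry_nonneg hDpd hDoff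
  refine ⟨⟨hSsymm, ?_, ?_⟩, ?_⟩
  · -- row sums
    intro i
    have hC1 : C *ᵥ (fun _ => (1:ℝ)) = D *ᵥ (fun _ => (-1:ℝ)) := by
      funext f
      have hsplit := sum_split T (fun j => L ↑f j)
      rw [lap_rowsum G ↑f] at hsplit
      have hl : (C *ᵥ fun _ => (1:ℝ)) f = ∑ j : T, L ↑f ↑j := by
        simp [mulVec, dotProduct, hC]
      have hr : (D *ᵥ fun _ => (-1:ℝ)) f = -∑ j : ↥Tᶜ, L ↑f ↑j := by
        simp [mulVec, dotProduct, hD, Finset.sum_neg_distrib]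
      rw [hl, hr]
      linarith
    have hmain : (Bm * D⁻¹ * C) *ᵥ (fun _ => (1:ℝ)) = Bm *ᵥ (fun _ => (-1:ℝ)) := by
      rw [← Matrix.mulVec_mulVec, hC1, Matrix.mulVec_mulVec,
        Matrix.nonsing_inv_mul_cancel_right _ _ hDdet]
    have hsum : ∑ j : T, schur G T i j = (schur G T *ᵥ (fun _ => (1:ℝ))) i := by
      simp [mulVec, dotProduct]
    rw [hsum, hSdef, Matrix.sub_mulVec, hmain]
    have hAv : (A *ᵥ fun _ => (1:ℝ)) i = ∑ j : T, L ↑i ↑j := by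
      simp [mulVec, dotProduct, hA]
    have hBv : (Bm *ᵥ fun _ => (-1:ℝ)) i = -∑ j : ↥Tᶜ, L ↑i ↑j := by
      simp [mulVec, dotProduct, hBm, Finset.sum_neg_distrib]
    have hsplit := sum_split T (fun j => L ↑i j)
    rw [lap_rowsum G ↑i] at hsplit
    simp only [Pi.sub_apply]
    rw [hAv, hBv]
    linarith
  · -- off-diagonal
    intro i j hij
    have hBD : ∀ f : ↥Tᶜ, (Bm * D⁻¹) i f ≤ 0 := by
      intro f
      rw [Matrix.mul_apply]
      apply Finset.sum_nonpos
      intro f' _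
      have h1 : Bm i f' ≤ 0 := lap_offdiag G (by
        intro h
        exact f'.2 (h ▸ i.2))
      exact mul_nonpos_of_nonpos_of_nonneg h1 (hDinv_nn f' f)
    have hpos : 0 ≤ (Bm * D⁻¹ * C) i j := by
      rw [Matrix.mul_apply]
      apply Finset.sum_nonneg
      intro f _
      have h2 : C f j ≤ 0 := lap_offdiag G (by
        intro h
        exact f.2 (h.symm ▸ j.2))
      rw [← neg_mul_neg]
      exact mul_nonneg (neg_nonneg.2 (hBD f)) (neg_nonneg.2 h2)
    have hAij : A i j ≤ 0 := lap_offdiag G (Subtype.coe_injective.ne hij)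
    have : schur G T i j = A i j - (Bm * D⁻¹ * C) i j := by rw [hSdef]; rfl
    rw [this]
    linarith
  · -- effective resistance
    intro x y
    set b : T → ℝ := fun i => (if i = x then (1:ℝ) else 0) - (if i = y then 1 else 0) with hb
    have hbt : extz T b = incVec ↑x ↑y := by
      funext i
      by_cases h : i ∈ T
      · simp only [extz, dif_pos h, incVec, hb, Subtype.ext_iff]
      · have hx' : i ≠ ↑x := fun e => h (e ▸ x.2)
        have hy' : i ≠ ↑y := fun e => h (e ▸ y.2)
        simp [extz, dif_neg h, incVec, hx', hy']
    have hsum : ∑ i, extz T b i = 0 := by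
      rw [hbt]
      simp [incVec, Finset.sum_sub_distrib]
    set v := pinv L *ᵥ extz T b with hv
    have hvsol : L *ᵥ v = extz T b := lap_solve G hG _ hsum
    set u : T → ℝ := fun i => v ↑i with hu
    set vF : ↥Tᶜ → ℝ := fun f => v ↑f with hvF
    have hrowF : D *ᵥ vF = -(C *ᵥ u) := by
      funext f
      have h0 : extz T b ↑f = 0 := dif_neg f.2
      have hlv : (L *ᵥ v) ↑f = 0 := by rw [hvsol, h0]
      have hsplit := sum_split T (fun j => L ↑f j * v j)
      have hLv : (L *ᵥ v) ↑f = ∑ j, L ↑f j * v j := by simp [mulVec, dotProduct]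
      have hCu : (C *ᵥ u) f = ∑ j : T, L ↑f ↑j * v ↑j := by
        simp [mulVec, dotProduct, hC, hu]
      have hDvF : (D *ᵥ vF) f = ∑ j : ↥Tᶜ, L ↑f ↑j * v ↑j := by
        simp [mulVec, dotProduct, hD, hvF]
      rw [hLv] at hlv
      rw [hsplit, ← hCu, ← hDvF] at hlv
      simp only [Pi.neg_apply]
      linarith
    have hvFeq : D⁻¹ *ᵥ (C *ᵥ u) = -vF := by
      have : C *ᵥ u = D *ᵥ (-vF) := by rw [Matrix.mulVec_neg, hrowF, neg_neg]
      rw [this, Matrix.mulVec_mulVec, Matrix.nonsing_inv_mul D hDdet, Matrix.one_mulVec]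
    have hSu : schur G T *ᵥ u = b := by
      funext i
      have hmain : ((Bm * D⁻¹ * C) *ᵥ u) = Bm *ᵥ (-vF) := by
        rw [← Matrix.mulVec_mulVec, ← Matrix.mulVec_mulVec, hvFeq]
      have hAu : (A *ᵥ u) i = ∑ j : T, L ↑i ↑j * v ↑j := by
        simp [mulVec, dotProduct, hA, hu]
      have hBv : (Bm *ᵥ (-vF)) i = -∑ j : ↥Tᶜ, L ↑i ↑j * v ↑j := by
        simp [mulVec, dotProduct, hBm, hvF, Finset.sum_neg_distrib]
      have hsplit := sum_split T (fun j => L ↑i j * v j)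
      have hLv : (L *ᵥ v) ↑i = ∑ j, L ↑i j * v j := by simp [mulVec, dotProduct]
      have hbti : extz T b ↑i = b i := by simp [extz]
      have hlv : (L *ᵥ v) ↑i = b i := by rw [hvsol, hbti]
      rw [hLv, hsplit] at hlv
      rw [hSdef, Matrix.sub_mulVec, hmain]
      simp only [Pi.sub_apply]
      rw [hAu, hBv]
      linarith
    have hSherm : (schur G T).IsHermitian := by
      rw [Matrix.IsHermitian, Matrix.conjTranspose_eq_transpose_of_trivial]
      exact hSsymm
    have hLherm : L.IsHermitian := (SimpleGraph.posSemidef_lapMatrix ℝ G).1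
    have h2 : b ⬝ᵥ (pinv (schur G T) *ᵥ b) = b ⬝ᵥ u :=
      key_quad hSsymm (pinv_isMoorePenrose hSherm).1 hSu
    have h3 : extz T b ⬝ᵥ (pinv L *ᵥ extz T b) = extz T b ⬝ᵥ v :=
      key_quad (lap_symm G) (pinv_isMoorePenrose hLherm).1 hvsol
    have h4 : b ⬝ᵥ u = extz T b ⬝ᵥ v := by
      rw [dotProduct, dotProduct, sum_split T (fun i => extz T b i * v i)]
      have hz : ∀ i : ↥Tᶜ, extz T b ↑i * v ↑i = 0 := by
        intro i
        have h0 : extz T b ↑i = 0 := dif_neg i.2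
        rw [h0, zero_mul]
      rw [Finset.sum_congr rfl (fun i _ => hz i), Finset.sum_const_zero, add_zero]
      apply Finset.sum_congr rfl
      intro i _
      have : extz T b ↑i = b i := by simp [extz]
      rw [this, hu]
    show b ⬝ᵥ (pinv (schur G T) *ᵥ b) = effRes G ↑x ↑y
    rw [h2, h4, effRes, ← hbt, ← hL]
end
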